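/- Let Σ be a signed graph with n vertices and let μ ∉ {0,1,−1} be a non-main eigenvalue of Σ with multiplicity k < n−1. Then n ≤ C(t+2,3) − 1, where t = n − k. -/

import Mathlib

open Matrix Finset
open scoped RealInnerProductSpace


open Finset

section AuxCubic

variable {W : Type*} [AddCommGroup W] [Module ℝ W]
variable {ι : Type*} [Fintype ι] [DecidableEq ι]

/-- symmetric triple -/
def sym3 (i j l : ι) : Sym ι 3 := ⟨{i, j, l}, by simp⟩

noncomputable def mono3 (b : Module.Basis ι ℝ W) (m : Sym ι 3) : W → ℝ :=
  fun y => (m.1.map (fun i => b.repr y i)).prod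

lemma mono3_sym3 (b : Module.Basis ι ℝ W) (i j l : ι) (y : W) :
    mono3 b (sym3 i j l) y = b.repr y i * b.repr y j * b.repr y l := by
  simp [mono3, sym3, mul_assoc]

noncomputable def cubicSpan (b : Module.Basis ι ℝ W) : Submodule ℝ (W → ℝ) :=
  Submodule.span ℝ (Set.range (mono3 b))

lemma sum3_mul (a c d : ι → ℝ) :
    (∑ i, a i) * (∑ j, c j) * (∑ l, d l) = ∑ i, ∑ j, ∑ l, a i * c j * d l := by
  rw [Finset.sum_mul_sum, Finset.sum_mul]
  refine Finset.sum_congr rfl fun i _ => ?_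
  rw [Finset.sum_mul]
  refine Finset.sum_congr rfl fun j _ => ?_
  rw [Finset.mul_sum]

lemma repr_eval (b : Module.Basis ι ℝ W) (ξ : W →ₗ[ℝ] ℝ) (y : W) :
    ξ y = ∑ i, b.repr y i * ξ (b i) := by
  conv_lhs => rw [← b.sum_repr y]
  simp only [map_sum, map_smul, smul_eq_mul]

lemma triple_mem (b : Module.Basis ι ℝ W) (ξ η ζ : W →ₗ[ℝ] ℝ) :
    (fun y => ξ y * η y * ζ y) ∈ cubicSpan b := by
  have hfun : (fun y => ξ y * η y * ζ y)
      = ∑ i, ∑ j, ∑ l, (ξ (b i) * η (b j) * ζ (b l)) • mono3 b (sym3 i j l) := by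
    funext y
    simp only [Finset.sum_apply, Pi.smul_apply, smul_eq_mul]
    rw [repr_eval b ξ y, repr_eval b η y, repr_eval b ζ y, sum3_mul]
    refine Finset.sum_congr rfl fun i _ => Finset.sum_congr rfl fun j _ =>
      Finset.sum_congr rfl fun l _ => ?_
    rw [mono3_sym3]
    ring
  rw [hfun]
  refine Submodule.sum_mem _ fun i _ => Submodule.sum_mem _ fun j _ =>
    Submodule.sum_mem _ fun l _ => Submodule.smul_mem _ _ ?_
  exact Submodule.subset_span (Set.mem_range_self _)

lemma finrank_cubicSpan_le (b : Module.Basis ι ℝ W) :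
    Module.finrank ℝ (cubicSpan b) ≤ (Fintype.card ι + 2).choose 3 := by
  have h1 : Module.finrank ℝ (cubicSpan b) ≤ Fintype.card (Sym ι 3) := by
    classical
    refine le_trans (finrank_span_le_card _) ?_
    rw [Set.toFinset_range]
    exact (Finset.card_image_le).trans (by simp)
  rw [Sym.card_sym_eq_choose] at h1
  have : Fintype.card ι + 3 - 1 = Fintype.card ι + 2 := by omega
  rwa [this] at h1

lemma card_le_of_indep_in_cubicSpan (b : Module.Basis ι ℝ W) {m : ℕ}
    (F : Fin m → (W → ℝ)) (hmem : ∀ i, F i ∈ cubicSpan b)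
    (hindep : LinearIndependent ℝ F) :
    m ≤ (Fintype.card ι + 2).choose 3 := by
  have : FiniteDimensional ℝ (cubicSpan b) :=
    FiniteDimensional.span_of_finite ℝ (Set.finite_range _)
  have hindep' : LinearIndependent ℝ (fun i => (⟨F i, hmem i⟩ : cubicSpan b)) := by
    refine hindep.of_comp (cubicSpan b).subtype
  have := hindep'.fintype_card_le_finrank
  simpa using this.trans (finrank_cubicSpan_le b)

end AuxCubic


theorem nonmain_cubic_bound {n : ℕ}
    (A : Matrix (Fin n) (Fin n) ℝ)
    (hsymm : A.IsSymm)
    (hentries : ∀ p q, A p q ∈ ({0, 1, -1} : Set ℝ))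
    (hdiag : ∀ p, A p p = 0)
    (μ : ℝ) (hμ : μ ∉ ({0, 1, -1} : Set ℝ))
    (heig : Module.End.HasEigenvalue (Matrix.toLin' A) μ)
    (hnonmain : ∀ v : Fin n → ℝ, A.mulVec v = μ • v → v ⬝ᵥ (fun _ => (1 : ℝ)) = 0)
    (k : ℕ) (hk : k = Module.finrank ℝ (Module.End.eigenspace (Matrix.toLin' A) μ))
    (hkn : k < n - 1)
    (t : ℕ) (ht : t = n - k) :
    n ≤ (t + 2).choose 3 - 1 := by
  classical
  have hn2 : 2 ≤ n := by omega
  have hμ0 : μ ≠ 0 := fun h => hμ (by simp [h])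
  have hμ1 : μ ≠ 1 := fun h => hμ (by simp [h])
  have hμm1 : μ ≠ -1 := fun h => hμ (by simp [h])
  let f : EuclideanSpace ℝ (Fin n) →ₗ[ℝ] EuclideanSpace ℝ (Fin n) := Matrix.toEuclideanLin A
  have hfapp : ∀ x : EuclideanSpace ℝ (Fin n), f x = A.mulVec x := fun x => Matrix.toLin'_apply A x
  have hinner : ∀ a b : EuclideanSpace ℝ (Fin n), ⟪a, b⟫ = ∑ i, a i * b i := by
    intro a b; simp [PiLp.inner_apply, RCLike.inner_apply, mul_comm]
  have hsa : ∀ x y : EuclideanSpace ℝ (Fin n), ⟪f x, y⟫ = ⟪x, f y⟫ := by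
    intro x y
    have h1 : ∀ a b : EuclideanSpace ℝ (Fin n), ⟪a, b⟫ = (a : Fin n → ℝ) ⬝ᵥ (b : Fin n → ℝ) := by
      intro a b; simp [PiLp.inner_apply, RCLike.inner_apply, dotProduct, mul_comm]
    rw [h1, h1, hfapp, hfapp, Matrix.dotProduct_mulVec, ← Matrix.mulVec_transpose, hsymm.eq]
  let E : Submodule ℝ (EuclideanSpace ℝ (Fin n)) := (Module.End.eigenspace (Matrix.toLin' A) μ).map
    (WithLp.linearEquiv 2 ℝ (Fin n → ℝ)).symm.toLinearMap
  have hE : ∀ v ∈ E, f v = μ • v := fun v hv => by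
    obtain ⟨w, hw, rfl⟩ := Submodule.mem_map.mp hv
    have h1 := Module.End.mem_eigenspace_iff.mp hw
    apply (WithLp.linearEquiv 2 ℝ (Fin n → ℝ)).injective
    simpa [f] using h1
  let K : Submodule ℝ (EuclideanSpace ℝ (Fin n)) := Eᗮ
  have hdimEK : Module.finrank ℝ E + Module.finrank ℝ K = n := by
    rw [Submodule.finrank_add_finrank_orthogonal]
    simp
  let jv : EuclideanSpace ℝ (Fin n) := WithLp.toLp 2 (fun _ => (1 : ℝ))
  have hjK : jv ∈ K := by
    rw [Submodule.mem_orthogonal]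
    intro v hv
    have h1 : A.mulVec v = μ • v := by rw [← hfapp]; exact congrArg WithLp.ofLp (hE v hv)
    have h2 := hnonmain v h1
    rw [hinner]
    simpa [jv, dotProduct] using h2
  let e : Fin n → EuclideanSpace ℝ (Fin n) := fun u => EuclideanSpace.single u (1 : ℝ)
  let q : Fin n → EuclideanSpace ℝ (Fin n) := fun u => (K.orthogonalProjectionOnto (e u) : EuclideanSpace ℝ (Fin n))
  have hqK : ∀ u, q u ∈ K := fun u => (K.orthogonalProjectionOnto (e u)).2
  have hq_inner : ∀ (u : Fin n), ∀ x ∈ K, ⟪q u, x⟫ = x u := by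
    intro u x hx
    have h1 : e u - q u ∈ Kᗮ := Submodule.sub_starProjection_mem_orthogonal (K := K) (e u)
    have h2 : ⟪e u - q u, x⟫ = 0 := by
      rw [real_inner_comm]
      exact (Submodule.mem_orthogonal K _).mp h1 x hx
    have h3 : ⟪e u, x⟫ = x u := by
      rw [hinner]
      simp [e, EuclideanSpace.single_apply, Finset.sum_ite_eq]
    have h4 := inner_sub_left (𝕜 := ℝ) (e u) (q u) x
    rw [h2] at h4
    rw [← h3]
    linarith [h4]
  have hrE : ∀ u, e u - q u ∈ E := by
    intro u
    have h1 : e u - q u ∈ Kᗮ := Submodule.sub_starProjection_mem_orthogonal (K := K) (e u)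
    rwa [Submodule.orthogonal_orthogonal] at h1
  have hfK : ∀ x ∈ K, f x ∈ K := by
    intro x hx
    rw [Submodule.mem_orthogonal]
    intro v hv
    rw [← hsa v x, hE v hv, real_inner_smul_left, (Submodule.mem_orthogonal E x).mp hx v hv, mul_zero]
  -- the key value lemma
  have hBval : ∀ u v : Fin n, ⟪q u, f (q v) - μ • (q v)⟫ = A u v - (if u = v then μ else 0) := by
    intro u v
    have hw : f (q v) - μ • (q v) ∈ K := K.sub_mem (hfK _ (hqK v)) (K.smul_mem μ (hqK v))
    have h0 := hq_inner u _ hw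
    have hr : f (e v - q v) - μ • (e v - q v) = 0 := by
      rw [hE _ (hrE v), sub_self]
    have hw2 : f (q v) - μ • (q v) = f (e v) - μ • (e v) := by
      have h6 : f (q v) - μ • q v - (f (e v) - μ • e v) = -(f (e v - q v) - μ • (e v - q v)) := by
        rw [map_sub, smul_sub]; abel
      have h7 : f (q v) - μ • q v - (f (e v) - μ • e v) = 0 := by rw [h6, hr, neg_zero]
      exact sub_eq_zero.mp h7
    rw [h0, hw2]
    have h8 : (A.mulVec (e v)) u = A u v := by
      simp [e, Matrix.mulVec, dotProduct, EuclideanSpace.single_apply]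
    have h9 : (f (e v) - μ • (e v)) u = (A.mulVec (e v)) u - μ * (e v u) := by
      simp [hfapp]
    rw [h9, h8]
    have h10 : (e v) u = if u = v then 1 else 0 := by
      simp [e, EuclideanSpace.single_apply]
    rw [h10]
    by_cases h : u = v <;> simp [h]
  have hkE : k = Module.finrank ℝ E := by
    rw [hk]; exact (LinearEquiv.finrank_map_eq _ _).symm
  have hdimK : Module.finrank ℝ K = t := by omega
  have hjv : ∀ i : Fin n, jv i = 1 := fun _ => rfl
  suffices hfin : n + 1 ≤ (t + 2).choose 3 by omega
  let qK : Fin n → K := fun u => ⟨q u, hqK u⟩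
  let Bform : K →ₗ[ℝ] K →ₗ[ℝ] ℝ := LinearMap.mk₂ ℝ
    (fun y z => ⟪(y : EuclideanSpace ℝ (Fin n)), f z⟫ - μ * ⟪(y : EuclideanSpace ℝ (Fin n)), (z : EuclideanSpace ℝ (Fin n))⟫)
    (by intro m₁ m₂ y; simp only [Submodule.coe_add, inner_add_left]; ring)
    (by intro c m y; simp only [Submodule.coe_smul, real_inner_smul_left, smul_eq_mul]; ring)
    (by intro m y₁ y₂; simp only [Submodule.coe_add, map_add, inner_add_right]; ring)
    (by intro c m y; simp only [Submodule.coe_smul, LinearMap.map_smul, real_inner_smul_right, smul_eq_mul]; ring)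
  have hB2 : ∀ u v : Fin n, Bform (qK u) (qK v) = A u v - (if u = v then μ else 0) := by
    intro u v
    have h1 := hBval u v
    rw [inner_sub_right, real_inner_smul_right] at h1
    simpa [Bform, qK, LinearMap.mk₂_apply] using h1
  have hlam0 : ∀ y : K, True := fun _ => trivial
  let lam : K →ₗ[ℝ] ℝ :=
  { toFun := fun y => ⟪(y : EuclideanSpace ℝ (Fin n)), jv⟫
    map_add' := by intro a b; simp only [Submodule.coe_add, inner_add_left]
    map_smul' := by intro c a; simp only [Submodule.coe_smul, real_inner_smul_left, smul_eq_mul, RingHom.id_apply] }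
  have hlam : ∀ v : Fin n, lam (qK v) = 1 := by
    intro v
    have h1 := hq_inner v jv hjK
    show ⟪(q v : EuclideanSpace ℝ (Fin n)), jv⟫ = 1
    rw [h1]
  -- basis of K
  have hfin : FiniteDimensional ℝ K := inferInstance
  let b : Module.Basis (Fin (Module.finrank ℝ K)) ℝ K := Module.finBasis ℝ K
  -- the functions
  let hfn : Fin n → (K → ℝ) := fun u y =>
    Bform (qK u) y * Bform (qK u) y * Bform (qK u) y - Bform (qK u) y * lam y * lam y
  let hst : K → ℝ := fun y => lam y * Bform y y + μ * (lam y * lam y * lam y)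
  -- values
  have hBdiag : ∀ v : Fin n, Bform (qK v) (qK v) = -μ := by
    intro v; rw [hB2 v v, hdiag v]; simp
  have hval : ∀ u v : Fin n, hfn u (qK v) = if u = v then μ - μ^3 else 0 := by
    intro u v
    show Bform (qK u) (qK v) * Bform (qK u) (qK v) * Bform (qK u) (qK v)
      - Bform (qK u) (qK v) * lam (qK v) * lam (qK v) = _
    rw [hlam v]
    by_cases h : u = v
    · subst h; rw [hBdiag u]; simp; ring
    · rw [hB2 u v, if_neg h, if_neg h]
      have hent := hentries u v
      simp only [Set.mem_insert_iff, Set.mem_singleton_iff] at hent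
      rcases hent with h0 | h0 | h0 <;> rw [h0] <;> norm_num
  have hsval : ∀ v : Fin n, hst (qK v) = 0 := by
    intro v
    show lam (qK v) * Bform (qK v) (qK v) + μ * (lam (qK v) * lam (qK v) * lam (qK v)) = 0
    rw [hlam v, hBdiag v]; ring
  -- the special vector
  let a0 : Fin n := ⟨0, by omega⟩
  let b0 : Fin n := ⟨1, by omega⟩
  have hab : a0 ≠ b0 := by simp [a0, b0, Fin.ext_iff]
  let xs : K := qK a0 + qK b0
  have hlamxs : lam xs = 2 := by
    show lam (qK a0 + qK b0) = 2
    rw [map_add, hlam, hlam]; norm_num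
  have hBxs : Bform xs xs = 2 * A a0 b0 - 2 * μ := by
    show Bform (qK a0 + qK b0) (qK a0 + qK b0) = _
    simp only [map_add, LinearMap.add_apply]
    rw [hB2, hB2, hB2, hB2, if_pos rfl, if_pos rfl, if_neg hab, if_neg (Ne.symm hab),
      hdiag, hdiag, hsymm.apply a0 b0]
    ring
  have hsxs : hst xs = 4 * (A a0 b0 + μ) := by
    show lam xs * Bform xs xs + μ * (lam xs * lam xs * lam xs) = _
    rw [hlamxs, hBxs]; ring
  have hsxs0 : hst xs ≠ 0 := by
    rw [hsxs]
    have hent := hentries a0 b0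
    simp only [Set.mem_insert_iff, Set.mem_singleton_iff] at hent
    rcases hent with h0 | h0 | h0 <;> rw [h0] <;> intro hcon
    · exact hμ0 (by linarith)
    · exact hμm1 (by linarith)
    · exact hμ1 (by linarith)
  have hγ : μ - μ^3 ≠ 0 := by
    intro h
    have : μ * (1 - μ) * (1 + μ) = 0 := by ring_nf; linarith [h]
    rcases mul_eq_zero.mp this with h1 | h1
    · rcases mul_eq_zero.mp h1 with h2 | h2
      · exact hμ0 h2
      · exact hμ1 (by linarith)
    · exact hμm1 (by linarith)
  -- membership in cubicSpan
  have hmemh : ∀ u : Fin n, hfn u ∈ cubicSpan b := by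
    intro u
    have h1 := triple_mem b (Bform (qK u)) (Bform (qK u)) (Bform (qK u))
    have h2 := triple_mem b (Bform (qK u)) lam lam
    exact Submodule.sub_mem _ h1 h2
  have hByy : ∀ y : K, Bform y y = ∑ i, ∑ j, b.repr y i * b.repr y j * Bform (b j) (b i) := by
    intro y
    rw [repr_eval b (Bform y) y]
    refine Finset.sum_congr rfl fun i _ => ?_
    have h1 : Bform y (b i) = ∑ j, b.repr y j * Bform (b j) (b i) := by
      have h2 := repr_eval b (Bform.flip (b i)) y
      simpa [LinearMap.flip_apply] using h2
    rw [h1, Finset.mul_sum]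
    exact Finset.sum_congr rfl fun j _ => by ring
  have hmemhs : hst ∈ cubicSpan b := by
    have hfun : hst = (∑ i, ∑ j, Bform (b j) (b i) • (fun y => lam y * (b.coord i) y * (b.coord j) y))
        + μ • (fun y : K => lam y * lam y * lam y) := by
      funext y
      simp only [Pi.add_apply, Finset.sum_apply, Pi.smul_apply, smul_eq_mul, Module.Basis.coord_apply]
      show lam y * Bform y y + μ * (lam y * lam y * lam y) = _
      rw [hByy y, Finset.mul_sum]
      congr 1
      refine Finset.sum_congr rfl fun i _ => ?_
      rw [Finset.mul_sum]
      exact Finset.sum_congr rfl fun j _ => by ring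
    rw [hfun]
    exact Submodule.add_mem _
      (Submodule.sum_mem _ fun i _ => Submodule.sum_mem _ fun j _ =>
        Submodule.smul_mem _ _ (triple_mem b lam (b.coord i) (b.coord j)))
      (Submodule.smul_mem _ _ (triple_mem b lam lam lam))
  let F : Fin (n + 1) → (K → ℝ) := Fin.snoc hfn hst
  have hmemF : ∀ i, F i ∈ cubicSpan b := by
    intro i
    refine Fin.lastCases ?_ ?_ i
    · simpa [F, Fin.snoc_last] using hmemhs
    · intro u; simpa [F, Fin.snoc_castSucc] using hmemh u
  have hindep : LinearIndependent ℝ F := by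
    rw [Fintype.linearIndependent_iff]
    intro g hg
    have hgv : ∀ y : K, (∑ u : Fin n, g u.castSucc * hfn u y) + g (Fin.last n) * hst y = 0 := by
      intro y
      have h1 := congrFun hg y
      simp only [Finset.sum_apply, Pi.smul_apply, smul_eq_mul, Pi.zero_apply] at h1
      rw [Fin.sum_univ_castSucc] at h1
      simpa [F, Fin.snoc_castSucc, Fin.snoc_last] using h1
    have hcast : ∀ v : Fin n, g (Fin.castSucc v) = 0 := by
      intro v
      have h1 := hgv (qK v)
      rw [hsval v, mul_zero, add_zero] at h1
      have h2 : ∑ u : Fin n, g u.castSucc * hfn u (qK v) = g v.castSucc * (μ - μ^3) := by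
        calc ∑ u : Fin n, g u.castSucc * hfn u (qK v)
            = ∑ u : Fin n, (if u = v then g u.castSucc * (μ - μ^3) else 0) := by
              refine Finset.sum_congr rfl fun u _ => ?_
              rw [hval u v]; by_cases h : u = v <;> simp [h]
          _ = g v.castSucc * (μ - μ^3) := by simp
      rw [h2] at h1
      rcases mul_eq_zero.mp h1 with h | h
      · exact h
      · exact absurd h hγ
    have hlast : g (Fin.last n) = 0 := by
      have h1 := hgv xs
      have h2 : ∑ u : Fin n, g u.castSucc * hfn u xs = 0 :=
        Finset.sum_eq_zero fun u _ => by rw [hcast u, zero_mul]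
      rw [h2, zero_add] at h1
      rcases mul_eq_zero.mp h1 with h | h
      · exact h
      · exact absurd h hsxs0
    intro i
    exact Fin.lastCases hlast hcast i
  have hcard := card_le_of_indep_in_cubicSpan b F hmemF hindep
  simpa [hdimK] using hcard
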